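/- For every integer n ≥ 2 and every p ∈ ℤ^{3n−1}, L(p) = L(ψ(p)), where ψ is the automorphism of ℤ^{3n−1} sending p = (a_1,…,a_n,b_1,…,b_n,c_2,…,c_n) to p′ = (a′_1,…,a′_n,b′_1,…,b′_n,c′_2,…,c′_n) defined by a′_k = a_{n+1−k} for 1 ≤ k ≤ n; b′_k = b_{n+2−k} for 2 ≤ k ≤ n and b′_1 = a_{n−1} + b_n − c_n; c′_k = a_{n+2−k} + b_{n+2−k} + c_{n+1−k} − b_{n+1−k} − a_{n−k} for 2 ≤ k ≤ n−1; and c′_n = a_2 + b_2 − b_1. (The equality holds in [0,∞].) -/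

import Mathlib

open MeasureTheory Finset
open scoped ENNReal

noncomputable section

/-- The unit cube `[0,1]^n`. -/
def cube (n : ℕ) : Set (Fin n → ℝ) := Set.univ.pi fun _ => Set.Icc (0:ℝ) 1

/-- The `k`-th coordinate (1-based indexing) of `x`. -/
def ent {n : ℕ} (x : Fin n → ℝ) (k : ℕ) : ℝ := if h : k - 1 < n then x ⟨k - 1, h⟩ else 0

/-- `δ_k(x) = 1 - x_k δ_{k-1}(x)`, with `δ_0 = 1`. -/
def delta {n : ℕ} (x : Fin n → ℝ) : ℕ → ℝ
  | 0 => 1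
  | k + 1 => 1 - ent x (k + 1) * delta x k

/-- The integral `L(p)` for `p = (a_1,…,a_n,b_1,…,b_n,c_2,…,c_n)`. -/
def Lint (n : ℕ) (a b c : ℕ → ℤ) : ℝ≥0∞ :=
  ∫⁻ x in cube n, ENNReal.ofReal
    ((∏ k ∈ Icc 1 n, ent x k ^ a k * (1 - ent x k) ^ b k) /
      ((∏ k ∈ Icc 2 n, delta x k ^ c k) * delta x n))

namespace Stmt10Aux

/-- the open unit cube -/
def oc (n : ℕ) : Set (Fin n → ℝ) := Set.univ.pi fun _ => Set.Ioo (0:ℝ) 1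

variable {n : ℕ}

lemma ent_coord (x : Fin n → ℝ) (k : Fin n) : ent x ((k:ℕ)+1) = x k := by
  simp only [ent, Nat.add_sub_cancel, k.isLt, dif_pos, Fin.eta]

lemma ent_of_lt (x : Fin n → ℝ) {k : ℕ} (h1 : 1 ≤ k) (h2 : k ≤ n) :
    ent x k = x ⟨k-1, by omega⟩ := by
  simp only [ent, dif_pos (show k - 1 < n by omega)]

lemma ent_of_gt (x : Fin n → ℝ) {k : ℕ} (h : n < k) : ent x k = 0 := by
  simp only [ent, dif_neg (show ¬ (k - 1 < n) by omega)]

lemma delta_zero (x : Fin n → ℝ) : delta x 0 = 1 := rfl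
lemma delta_succ (x : Fin n → ℝ) (m : ℕ) : delta x (m+1) = 1 - ent x (m+1) * delta x m := rfl

lemma delta_one (x : Fin n → ℝ) : delta x 1 = 1 - ent x 1 := by
  simp [delta_succ, delta_zero]

lemma delta_top (x : Fin n → ℝ) : delta x (n+1) = 1 := by
  rw [delta_succ, ent_of_gt x (by omega)]; ring

lemma one_sub_delta (x : Fin n → ℝ) {m : ℕ} (hm : 1 ≤ m) :
    1 - delta x m = ent x m * delta x (m-1) := by
  obtain ⟨m, rfl⟩ := Nat.exists_eq_add_of_le' hm
  rw [delta_succ x m, Nat.add_sub_cancel]; ring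

lemma mem_oc {x : Fin n → ℝ} (hx : x ∈ oc n) (k : Fin n) : 0 < x k ∧ x k < 1 := by
  have := hx k (Set.mem_univ k); exact ⟨this.1, this.2⟩

lemma ent_nonneg {x : Fin n → ℝ} (hx : x ∈ oc n) (k : ℕ) : 0 ≤ ent x k := by
  unfold ent; split
  · exact (mem_oc hx _).1.le
  · exact le_refl 0

lemma ent_lt_one {x : Fin n → ℝ} (hx : x ∈ oc n) (k : ℕ) : ent x k < 1 := by
  unfold ent; split
  · exact (mem_oc hx _).2
  · norm_num

lemma ent_pos {x : Fin n → ℝ} (hx : x ∈ oc n) {k : ℕ} (h1 : 1 ≤ k) (h2 : k ≤ n) :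
    0 < ent x k := by
  rw [ent_of_lt x h1 h2]; exact (mem_oc hx _).1

lemma delta_pos {x : Fin n → ℝ} (hx : x ∈ oc n) (m : ℕ) :
    0 < delta x m ∧ delta x m ≤ 1 := by
  induction m with
  | zero => norm_num [delta_zero]
  | succ m ih =>
      rw [delta_succ]
      have h1 : 0 ≤ ent x (m+1) * delta x m :=
        mul_nonneg (ent_nonneg hx _) ih.1.le
      have h2 : ent x (m+1) * delta x m < 1 := by
        calc ent x (m+1) * delta x m ≤ ent x (m+1) * 1 :=
              mul_le_mul_of_nonneg_left ih.2 (ent_nonneg hx _)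
          _ < 1 := by simpa using ent_lt_one hx (m+1)
      constructor <;> [linarith; linarith]

lemma delta_ne {x : Fin n → ℝ} (hx : x ∈ oc n) (m : ℕ) : delta x m ≠ 0 :=
  (delta_pos hx m).1.ne'

lemma delta_lt_one {x : Fin n → ℝ} (hx : x ∈ oc n) {m : ℕ} (h1 : 1 ≤ m) (h2 : m ≤ n) :
    delta x m < 1 := by
  obtain ⟨m', rfl⟩ := Nat.exists_eq_add_of_le' h1
  rw [delta_succ]
  have := mul_pos (ent_pos hx (by omega) (by omega) : (0:ℝ) < ent x (m'+1))
    (delta_pos hx m').1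
  linarith


open ContinuousLinearMap

def Phi (x : Fin n → ℝ) : Fin n → ℝ := fun k => delta x ((k:ℕ)+1)

def Rv (z : Fin n → ℝ) : Fin n → ℝ := fun k => z (Fin.rev k)

/-- previous entry, with convention `1` at index `0`. -/
def pz (z : Fin n → ℝ) (k : Fin n) : ℝ :=
  if h : 0 < (k:ℕ) then z ⟨(k:ℕ)-1, by omega⟩ else 1

def Psi (z : Fin n → ℝ) : Fin n → ℝ := fun k => (1 - z k) * (pz z k)⁻¹

def Smap (y : Fin n → ℝ) : Fin n → ℝ := Psi (Rv (Phi y))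

lemma rv_phi (y : Fin n → ℝ) (k : Fin n) : Rv (Phi y) k = delta y (n - (k:ℕ)) := by
  have : (Fin.rev k : ℕ) + 1 = n - (k:ℕ) := by
    have := k.isLt
    simp [Fin.rev]; omega
  simp only [Rv, Phi, this]

lemma pz_rv_phi (y : Fin n → ℝ) (k : Fin n) :
    pz (Rv (Phi y)) k = delta y (n + 1 - (k:ℕ)) := by
  unfold pz
  split
  · next h =>
      rw [rv_phi]
      congr 1
      simp only []
      omega
  · next h =>
      have : (k:ℕ) = 0 := by omega
      rw [this, Nat.sub_zero, delta_top]

lemma Smap_apply (y : Fin n → ℝ) (k : Fin n) :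
    Smap y k = (1 - delta y (n - (k:ℕ))) * (delta y (n + 1 - (k:ℕ)))⁻¹ := by
  unfold Smap Psi
  rw [rv_phi, pz_rv_phi]

lemma ent_Smap (y : Fin n → ℝ) {k : ℕ} (h1 : 1 ≤ k) (h2 : k ≤ n) :
    ent (Smap y) k = (1 - delta y (n + 1 - k)) * (delta y (n + 2 - k))⁻¹ := by
  rw [ent_of_lt _ h1 h2, Smap_apply]
  show (1 - delta y (n - (k-1))) * (delta y (n + 1 - (k-1)))⁻¹ = _
  have e1 : n - (k - 1) = n + 1 - k := by omega
  have e2 : n + 1 - (k - 1) = n + 2 - k := by omega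
  rw [e1, e2]

lemma delta_Smap {y : Fin n → ℝ} (hy : y ∈ oc n) :
    ∀ m, m ≤ n + 1 → delta (Smap y) m = delta y (n + 1 - m) := by
  intro m
  induction m with
  | zero => intro _; rw [delta_zero, Nat.sub_zero, delta_top]
  | succ m ih =>
      intro hm
      by_cases hm' : m + 1 ≤ n
      · rw [delta_succ, ih (by omega), ent_Smap y (by omega) hm']
        have e1 : n + 1 - (m+1) = n - m := by omega
        have e2 : n + 2 - (m+1) = n + 1 - m := by omega
        rw [e1, e2]
        field_simp [delta_ne hy (n+1-m)]
        ring
      · have hm'' : m = n := by omega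
        subst hm''
        rw [delta_top, Nat.sub_self, delta_zero]

lemma ent_Smap' {y : Fin n → ℝ} (hy : y ∈ oc n) {k : ℕ} (h1 : 1 ≤ k) (h2 : k ≤ n) :
    ent (Smap y) k = ent y (n + 1 - k) * delta y (n - k) * (delta y (n + 2 - k))⁻¹ := by
  rw [ent_Smap y h1 h2, one_sub_delta y (show 1 ≤ n + 1 - k by omega)]
  have : n + 1 - k - 1 = n - k := by omega
  rw [this]

lemma one_sub_ent_Smap {y : Fin n → ℝ} (hy : y ∈ oc n) {k : ℕ} (h1 : 1 ≤ k) (h2 : k ≤ n) :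
    1 - ent (Smap y) k
      = (1 - ent y (n + 2 - k)) * delta y (n + 1 - k) * (delta y (n + 2 - k))⁻¹ := by
  rw [ent_Smap y h1 h2]
  have hne : delta y (n + 2 - k) ≠ 0 := delta_ne hy _
  have hd : delta y (n + 2 - k) = 1 - ent y (n + 2 - k) * delta y (n + 1 - k) := by
    have e : n + 2 - k = (n + 1 - k) + 1 := by omega
    rw [e, delta_succ]
  field_simp
  linarith [hd]

lemma Smap_mem {y : Fin n → ℝ} (hy : y ∈ oc n) : Smap y ∈ oc n := by
  intro k _
  have h1 : 1 ≤ (k:ℕ)+1 := by omega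
  have h2 : (k:ℕ)+1 ≤ n := k.isLt
  constructor
  · have := ent_Smap' hy h1 h2
    rw [ent_coord] at this
    rw [this]
    exact mul_pos (mul_pos (ent_pos hy (by omega) (by omega)) (delta_pos hy _).1)
      (inv_pos.2 (delta_pos hy _).1)
  · have := one_sub_ent_Smap hy h1 h2
    rw [ent_coord] at this
    have hpos : 0 < 1 - Smap y k := by
      rw [this]
      have he : ent y (n + 2 - ((k:ℕ)+1)) < 1 := ent_lt_one hy _
      exact mul_pos (mul_pos (by linarith) (delta_pos hy _).1)
        (inv_pos.2 (delta_pos hy _).1)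
    linarith

lemma Smap_invol {y : Fin n → ℝ} (hy : y ∈ oc n) : Smap (Smap y) = y := by
  funext k
  have h2 : (k:ℕ)+1 ≤ n := k.isLt
  rw [Smap_apply]
  rw [delta_Smap hy _ (by omega), delta_Smap hy _ (by omega)]
  have e1 : n + 1 - (n - (k:ℕ)) = (k:ℕ) + 1 := by omega
  have e2 : n + 1 - (n + 1 - (k:ℕ)) = (k:ℕ) := by omega
  rw [e1, e2, one_sub_delta y (show 1 ≤ (k:ℕ)+1 by omega)]
  have e3 : (k:ℕ) + 1 - 1 = (k:ℕ) := rfl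
  rw [e3, ent_coord]
  field_simp [delta_ne hy (k:ℕ)]


open ContinuousLinearMap

def dDelta (x : Fin n → ℝ) : ℕ → ((Fin n → ℝ) →L[ℝ] ℝ)
  | 0 => 0
  | m+1 =>
      if h : m < n then
        -(x ⟨m, h⟩ • dDelta x m + delta x m • ContinuousLinearMap.proj (⟨m, h⟩ : Fin n))
      else 0

lemma hasFDerivAt_delta (x : Fin n → ℝ) :
    ∀ m, HasFDerivAt (fun x : Fin n → ℝ => delta x m) (dDelta x m) x := by
  intro m
  induction m with
  | zero =>
      show HasFDerivAt (fun _ : Fin n → ℝ => (1:ℝ)) _ x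
      rw [dDelta]
      exact hasFDerivAt_const 1 x
  | succ m ih =>
      by_cases h : m < n
      · have hfun : (fun x : Fin n → ℝ => delta x (m+1))
            = fun x : Fin n → ℝ => 1 - x ⟨m, h⟩ * delta x m := by
          funext z
          rw [delta_succ, ent_of_lt z (by omega) (by omega)]
          rfl
        rw [hfun, dDelta, dif_pos h]
        exact ((hasFDerivAt_apply (⟨m,h⟩ : Fin n) x).mul ih).const_sub 1
      · have hfun : (fun x : Fin n → ℝ => delta x (m+1)) = fun _ => (1:ℝ) := by
          funext z
          rw [delta_succ, ent_of_gt z (by omega)]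
          ring
        rw [hfun, dDelta, dif_neg h]
        exact hasFDerivAt_const 1 x

lemma dDelta_single_zero (x : Fin n → ℝ) :
    ∀ m (j : Fin n), m ≤ (j:ℕ) → dDelta x m (Pi.single j 1) = 0 := by
  intro m
  induction m with
  | zero => intro j _; rw [dDelta]; simp
  | succ m ih =>
      intro j hj
      rw [dDelta, dif_pos (show m < n by have := j.isLt; omega)]
      have h1 : dDelta x m (Pi.single j 1) = 0 := ih j (by omega)
      have h2 : (Pi.single j (1:ℝ) : Fin n → ℝ) ⟨m, by have := j.isLt; omega⟩ = 0 := by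
        apply Pi.single_eq_of_ne
        intro hc
        have hc' : m = (j:ℕ) := congrArg Fin.val hc
        omega
      simp only [ContinuousLinearMap.neg_apply, ContinuousLinearMap.add_apply,
        ContinuousLinearMap.coe_smul', Pi.smul_apply, ContinuousLinearMap.proj_apply,
        smul_eq_mul, h1, h2]
      ring

lemma dDelta_single_diag (x : Fin n → ℝ) (m : ℕ) (h : m < n) :
    dDelta x (m+1) (Pi.single (⟨m,h⟩ : Fin n) 1) = -(delta x m) := by
  rw [dDelta, dif_pos h]
  have h1 : dDelta x m (Pi.single (⟨m,h⟩ : Fin n) 1) = 0 :=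
    dDelta_single_zero x m _ (le_refl m)
  simp only [ContinuousLinearMap.neg_apply, ContinuousLinearMap.add_apply,
    ContinuousLinearMap.coe_smul', Pi.smul_apply, ContinuousLinearMap.proj_apply,
    smul_eq_mul, h1, Pi.single_eq_same]
  ring

def dPhi (x : Fin n → ℝ) : (Fin n → ℝ) →L[ℝ] (Fin n → ℝ) :=
  ContinuousLinearMap.pi fun k : Fin n => dDelta x ((k:ℕ)+1)

lemma hasFDerivAt_Phi (x : Fin n → ℝ) : HasFDerivAt Phi (dPhi x) x :=
  hasFDerivAt_pi.2 fun k => hasFDerivAt_delta x ((k:ℕ)+1)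

lemma toMatrix'_apply_single (f : (Fin n → ℝ) →L[ℝ] (Fin n → ℝ)) (i j : Fin n) :
    LinearMap.toMatrix' (f : (Fin n → ℝ) →ₗ[ℝ] (Fin n → ℝ)) i j = f (Pi.single j 1) i := by
  rw [LinearMap.toMatrix'_apply]
  have hfs : (fun j' => if j' = j then (1:ℝ) else 0) = Pi.single j 1 := by
    funext j'
    rw [Pi.single_apply]
  rfl

lemma det_dPhi (x : Fin n → ℝ) : (dPhi x).det = ∏ i : Fin n, -(delta x (i:ℕ)) := by
  rw [ContinuousLinearMap.det, ← LinearMap.det_toMatrix']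
  rw [Matrix.det_of_lowerTriangular]
  · apply Finset.prod_congr rfl
    intro i _
    rw [toMatrix'_apply_single]
    show dDelta x ((i:ℕ)+1) (Pi.single i 1) = _
    have := dDelta_single_diag x (i:ℕ) i.isLt
    simpa using this
  · intro i j hij
    rw [toMatrix'_apply_single]
    show dDelta x ((i:ℕ)+1) (Pi.single j 1) = 0
    exact dDelta_single_zero x _ j (by exact hij)

def dpz (k : Fin n) : (Fin n → ℝ) →L[ℝ] ℝ :=
  if h : 0 < (k:ℕ) then ContinuousLinearMap.proj (⟨(k:ℕ)-1, by omega⟩ : Fin n) else 0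

lemma hasFDerivAt_pz (z : Fin n → ℝ) (k : Fin n) :
    HasFDerivAt (fun z : Fin n → ℝ => pz z k) (dpz k) z := by
  by_cases h : 0 < (k:ℕ)
  · have : (fun z : Fin n → ℝ => pz z k)
        = fun z : Fin n → ℝ => z ⟨(k:ℕ)-1, by omega⟩ := by
      funext z; rw [pz, dif_pos h]
    rw [this, dpz, dif_pos h]
    exact hasFDerivAt_apply _ z
  · have : (fun z : Fin n → ℝ => pz z k) = fun _ => (1:ℝ) := by
      funext z; rw [pz, dif_neg h]
    rw [this, dpz, dif_neg h]
    exact hasFDerivAt_const 1 z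

def dPsi (z : Fin n → ℝ) : (Fin n → ℝ) →L[ℝ] (Fin n → ℝ) :=
  ContinuousLinearMap.pi fun k : Fin n =>
    (1 - z k) • ((-(pz z k ^ 2)⁻¹) • dpz k) + (pz z k)⁻¹ • (-(ContinuousLinearMap.proj k))

lemma hasFDerivAt_Psi (z : Fin n → ℝ) (hz : ∀ k, pz z k ≠ 0) :
    HasFDerivAt Psi (dPsi z) z := by
  apply hasFDerivAt_pi.2
  intro k
  have hinv : HasFDerivAt (fun y : Fin n → ℝ => (pz y k)⁻¹)
      ((-(pz z k ^ 2)⁻¹) • dpz k) z :=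
    (hasDerivAt_inv (hz k)).comp_hasFDerivAt z (hasFDerivAt_pz z k)
  exact ((hasFDerivAt_apply k z).const_sub 1).mul hinv

lemma det_dPsi (z : Fin n → ℝ) : (dPsi z).det = ∏ i : Fin n, -(pz z i)⁻¹ := by
  rw [ContinuousLinearMap.det, ← LinearMap.det_toMatrix']
  rw [Matrix.det_of_lowerTriangular]
  · apply Finset.prod_congr rfl
    intro i _
    rw [toMatrix'_apply_single]
    simp only [dPsi, ContinuousLinearMap.pi_apply, ContinuousLinearMap.add_apply,
      ContinuousLinearMap.coe_smul', Pi.smul_apply, ContinuousLinearMap.neg_apply,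
      ContinuousLinearMap.proj_apply, smul_eq_mul]
    have hd : dpz i ((Pi.single i 1 : Fin n → ℝ)) = 0 := by
      rw [dpz]
      split
      · next h =>
          rw [ContinuousLinearMap.proj_apply]
          apply Pi.single_eq_of_ne
          intro hc
          have := congrArg Fin.val hc
          simp only [] at this
          omega
      · simp
    rw [hd, Pi.single_eq_same]
    ring
  · intro i j hij
    have hij' : (i:ℕ) < (j:ℕ) := hij
    rw [toMatrix'_apply_single]
    simp only [dPsi, ContinuousLinearMap.pi_apply, ContinuousLinearMap.add_apply,
      ContinuousLinearMap.coe_smul', Pi.smul_apply, ContinuousLinearMap.neg_apply,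
      ContinuousLinearMap.proj_apply, smul_eq_mul]
    have hd : dpz i ((Pi.single j 1 : Fin n → ℝ)) = 0 := by
      rw [dpz]
      split
      · next h =>
          rw [ContinuousLinearMap.proj_apply]
          apply Pi.single_eq_of_ne
          intro hc
          have := congrArg Fin.val hc
          simp only [] at this
          omega
      · simp
    have hs : (Pi.single j 1 : Fin n → ℝ) i = 0 :=
      Pi.single_eq_of_ne (fun hc => by have := congrArg Fin.val hc; omega) 1
    rw [hd, hs]
    ring

def RevL : (Fin n → ℝ) →L[ℝ] (Fin n → ℝ) :=
  ContinuousLinearMap.pi fun k : Fin n => ContinuousLinearMap.proj (Fin.rev k)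

lemma hasFDerivAt_Rv (z : Fin n → ℝ) : HasFDerivAt Rv (RevL (n := n)) z :=
  hasFDerivAt_pi.2 fun k => hasFDerivAt_apply (Fin.rev k) z

lemma abs_det_RevL : |(RevL (n := n)).det| = 1 := by
  have hm : LinearMap.toMatrix' ((RevL (n := n)) : (Fin n → ℝ) →ₗ[ℝ] (Fin n → ℝ))
      = Matrix.submatrix (1 : Matrix (Fin n) (Fin n) ℝ) (⇑(Fin.revPerm (n := n))) id := by
    ext i j
    rw [toMatrix'_apply_single]
    simp only [RevL, ContinuousLinearMap.pi_apply, ContinuousLinearMap.proj_apply,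
      Matrix.submatrix_apply, Matrix.one_apply, Fin.revPerm_apply, id_eq]
    rw [Pi.single_apply]
  rw [ContinuousLinearMap.det, ← LinearMap.det_toMatrix', hm, Matrix.det_permute,
    Matrix.det_one, mul_one]
  rcases Int.units_eq_one_or (Equiv.Perm.sign (Fin.revPerm (n := n))) with h | h <;>
    simp [h]

def Df (y : Fin n → ℝ) : (Fin n → ℝ) →L[ℝ] (Fin n → ℝ) :=
  dPsi (Rv (Phi y)) ∘L (RevL ∘L dPhi y)

lemma hasFDerivAt_Smap {y : Fin n → ℝ} (hy : y ∈ oc n) :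
    HasFDerivAt Smap (Df y) y := by
  have hz : ∀ k, pz (Rv (Phi y)) k ≠ 0 := by
    intro k
    rw [pz_rv_phi]
    exact delta_ne hy _
  exact (hasFDerivAt_Psi _ hz).comp y ((hasFDerivAt_Rv (Phi y)).comp y (hasFDerivAt_Phi y))

lemma abs_det_Df {y : Fin n → ℝ} (hy : y ∈ oc n) (hn : 1 ≤ n) :
    |(Df y).det| = delta y 1 / delta y n := by
  have hdet : (Df y).det = (dPsi (Rv (Phi y))).det * ((RevL (n:=n)).det * (dPhi y).det) := by
    rw [Df, ContinuousLinearMap.det, ContinuousLinearMap.toLinearMap_comp, LinearMap.det_comp,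
      ContinuousLinearMap.toLinearMap_comp, LinearMap.det_comp]
  rw [hdet, abs_mul, abs_mul, abs_det_RevL, det_dPsi, det_dPhi]
  have h1 : |∏ i : Fin n, -(pz (Rv (Phi y)) i)⁻¹|
      = ∏ i : Fin n, (delta y (n + 1 - (i:ℕ)))⁻¹ := by
    rw [Finset.abs_prod]
    apply Finset.prod_congr rfl
    intro i _
    rw [abs_neg, abs_inv, pz_rv_phi, abs_of_pos (delta_pos hy _).1]
  have h2 : |∏ i : Fin n, -(delta y (i:ℕ))| = ∏ i : Fin n, delta y (i:ℕ) := by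
    rw [Finset.abs_prod]
    apply Finset.prod_congr rfl
    intro i _
    rw [abs_neg, abs_of_pos (delta_pos hy _).1]
  rw [h1, h2, one_mul]
  -- now a product identity
  rw [Fin.prod_univ_eq_prod_range (fun i => (delta y (n + 1 - i))⁻¹) n,
    Fin.prod_univ_eq_prod_range (fun i => delta y i) n]
  have h3 : ∏ i ∈ range n, (delta y (n + 1 - i))⁻¹ = ∏ i ∈ range n, (delta y (i + 2))⁻¹ := by
    rw [← Finset.prod_range_reflect]
    apply Finset.prod_congr rfl
    intro j hj
    rw [Finset.mem_range] at hj
    congr 2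
    omega
  rw [h3, Finset.prod_inv_distrib]
  have h4 : (∏ i ∈ range n, delta y (i + 2)) * delta y 1 * delta y 0
      = (∏ i ∈ range n, delta y i) * delta y n * delta y (n+1) := by
    have e1 := Finset.prod_range_succ' (fun i => delta y i) (n+1)
    have e2 := Finset.prod_range_succ' (fun i => delta y (i+1)) n
    have e3 := Finset.prod_range_succ (fun i => delta y i) (n+1)
    have e4 := Finset.prod_range_succ (fun i => delta y i) n
    calc (∏ i ∈ range n, delta y (i + 2)) * delta y 1 * delta y 0
        = ((∏ i ∈ range n, delta y (i + 1 + 1)) * delta y (0+1)) * delta y 0 := by norm_num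
      _ = (∏ i ∈ range (n+1), delta y (i+1)) * delta y 0 := by rw [e2]
      _ = ∏ i ∈ range (n+2), delta y i := by rw [e1]
      _ = (∏ i ∈ range (n+1), delta y i) * delta y (n+1) := e3
      _ = (∏ i ∈ range n, delta y i) * delta y n * delta y (n+1) := by rw [e4]
  have hP : (∏ i ∈ range n, delta y i) ≠ 0 :=
    Finset.prod_ne_zero_iff.2 fun i _ => delta_ne hy i
  have hQ : (∏ i ∈ range n, delta y (i+2)) ≠ 0 :=
    Finset.prod_ne_zero_iff.2 fun i _ => delta_ne hy (i+2)
  rw [delta_zero, delta_top, mul_one, mul_one] at h4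
  rw [inv_mul_eq_div, div_eq_div_iff hQ (delta_ne hy n)]
  linarith [h4]


lemma measurableSet_oc : MeasurableSet (oc n) :=
  MeasurableSet.univ_pi fun _ => measurableSet_Ioo

lemma cube_ae_oc : (cube n : Set (Fin n → ℝ)) =ᵐ[volume] oc n := by
  rw [Filter.eventuallyEq_set]
  have hnull : (volume : Measure (Fin n → ℝ))
      (⋃ k : Fin n, {x : Fin n → ℝ | x k = 0} ∪ {x : Fin n → ℝ | x k = 1}) = 0 := by
    apply measure_iUnion_null
    intro k
    apply measure_union_null
    · show (volume : Measure (Fin n → ℝ)) {x | x k = 0} = 0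
      rw [MeasureTheory.volume_pi]
      exact MeasureTheory.Measure.pi_hyperplane _ k 0
    · show (volume : Measure (Fin n → ℝ)) {x | x k = 1} = 0
      rw [MeasureTheory.volume_pi]
      exact MeasureTheory.Measure.pi_hyperplane _ k 1
  have hsub : {x : Fin n → ℝ | x ∈ cube n ∧ x ∉ oc n}
      ⊆ ⋃ k : Fin n, {x : Fin n → ℝ | x k = 0} ∪ {x : Fin n → ℝ | x k = 1} := by
    rintro x ⟨hxc, hxo⟩
    simp only [oc, Set.mem_pi, Set.mem_univ, forall_true_left, not_forall] at hxo
    obtain ⟨k, hk⟩ := hxo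
    have hk' := hxc k (Set.mem_univ k)
    simp only [Set.mem_Icc] at hk'
    simp only [Set.mem_Ioo, not_and_or, not_lt] at hk
    apply Set.mem_iUnion.2
    refine ⟨k, ?_⟩
    rcases hk with hk | hk
    · exact Or.inl (show x k = 0 from le_antisymm hk hk'.1)
    · exact Or.inr (show x k = 1 from le_antisymm hk'.2 hk)
  have h0 : (volume : Measure (Fin n → ℝ)) {x | x ∈ cube n ∧ x ∉ oc n} = 0 :=
    measure_mono_null hsub hnull
  filter_upwards [measure_eq_zero_iff_ae_notMem.1 h0] with x hx
  simp only [Set.mem_setOf_eq, not_and, not_not] at hx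
  constructor
  · intro h; exact hx h
  · intro h k _
    exact Set.mem_Icc.2 ⟨(h k (Set.mem_univ k)).1.le, (h k (Set.mem_univ k)).2.le⟩

lemma Smap_injOn : Set.InjOn (Smap (n := n)) (oc n) := fun u hu v hv h => by
  rw [← Smap_invol hu, ← Smap_invol hv, h]

lemma Smap_image : Smap '' (oc n) = oc n := by
  apply Set.Subset.antisymm
  · rintro x ⟨y, hy, rfl⟩
    exact Smap_mem hy
  · intro y hy
    exact ⟨Smap y, Smap_mem hy, Smap_invol hy⟩

lemma reflect_prod (F : ℕ → ℝ) (G : ℕ → ℤ) (l u c : ℕ) (hu : u ≤ c) (hl : l ≤ u) :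
    ∏ k ∈ Icc l u, F (c - k) ^ G k = ∏ k ∈ Icc (c - u) (c - l), F k ^ G (c - k) := by
  apply Finset.prod_nbij' (fun k => c - k) (fun k => c - k)
  · intro a ha; rw [mem_Icc] at *; omega
  · intro a ha; rw [mem_Icc] at *; omega
  · intro a ha; rw [mem_Icc] at ha; omega
  · intro a ha; rw [mem_Icc] at ha; omega
  · intro a ha
    rw [mem_Icc] at ha
    have : c - (c - a) = a := by omega
    rw [this]

lemma pad_prod (F : ℕ → ℝ) (G : ℕ → ℤ) {l u l' u' : ℕ} (h1 : l' ≤ l) (h2 : u ≤ u') :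
    ∏ k ∈ Icc l u, F k ^ G k
      = ∏ k ∈ Icc l' u', F k ^ (if l ≤ k ∧ k ≤ u then G k else 0) := by
  rw [show (∏ k ∈ Icc l u, F k ^ G k)
      = ∏ k ∈ Icc l u, F k ^ (if l ≤ k ∧ k ≤ u then G k else 0) from
    Finset.prod_congr rfl fun k hk => by rw [mem_Icc] at hk; rw [if_pos hk]]
  apply Finset.prod_subset (Finset.Icc_subset_Icc h1 h2)
  intro k _ hk
  rw [mem_Icc] at hk
  rw [if_neg hk, zpow_zero]

lemma merge_prod (F : ℕ → ℝ) (s : Finset ℕ) (hF : ∀ k ∈ s, F k ≠ 0) (G H : ℕ → ℤ) :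
    (∏ k ∈ s, F k ^ G k) * (∏ k ∈ s, F k ^ H k) = ∏ k ∈ s, F k ^ (G k + H k) := by
  rw [← Finset.prod_mul_distrib]
  exact Finset.prod_congr rfl fun k hk => (zpow_add₀ (hF k hk) _ _).symm

lemma inv_prod_zpow (F : ℕ → ℝ) (s : Finset ℕ) (G : ℕ → ℤ) :
    (∏ k ∈ s, F k ^ G k)⁻¹ = ∏ k ∈ s, F k ^ (-G k) := by
  rw [← Finset.prod_inv_distrib]
  exact Finset.prod_congr rfl fun k _ => by rw [zpow_neg]

lemma single_zpow (F : ℕ → ℝ) {m l u : ℕ} (h1 : l ≤ m) (h2 : m ≤ u) (g : ℤ) :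
    F m ^ g = ∏ k ∈ Icc l u, F k ^ (if k = m then g else 0) := by
  rw [Finset.prod_eq_single m]
  · rw [if_pos rfl]
  · intro k _ hk; rw [if_neg hk, zpow_zero]
  · intro hm; exact absurd (Finset.mem_Icc.2 ⟨h1, h2⟩) hm

lemma integrand_eq {y : Fin n → ℝ} (hy : y ∈ oc n) (hn : 2 ≤ n) (a b c : ℕ → ℤ) :
    delta y 1 / delta y n *
      ((∏ k ∈ Icc 1 n, ent (Smap y) k ^ a k * (1 - ent (Smap y) k) ^ b k) /
        ((∏ k ∈ Icc 2 n, delta (Smap y) k ^ c k) * delta (Smap y) n))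

    = (∏ k ∈ Icc 1 n,
          ent y k ^ a (n + 1 - k) *
            (1 - ent y k) ^ (if k = 1 then a (n - 1) + b n - c n else b (n + 2 - k))) /
        ((∏ k ∈ Icc 2 n,
            delta y k ^ (if k = n then a 2 + b 2 - b 1
              else a (n + 2 - k) + b (n + 2 - k) + c (n + 1 - k) - b (n + 1 - k) - a (n - k))) *
          delta y n) := by
  have hDIcc : ∀ k ∈ Icc 1 n, delta y k ≠ 0 := fun k _ => delta_ne hy k
  have hprodne : ∀ G : ℕ → ℤ, (∏ k ∈ Icc 1 n, delta y k ^ G k) ≠ 0 := fun G =>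
    Finset.prod_ne_zero_iff.2 fun k _ => zpow_ne_zero _ (delta_ne hy k)
  have hP : (∏ k ∈ Icc 1 n, ent (Smap y) k ^ a k * (1 - ent (Smap y) k) ^ b k)
      = (∏ k ∈ Icc 1 n, ent y (n + 1 - k) ^ a k)
        * (∏ k ∈ Icc 1 n, delta y (n - k) ^ a k)
        * (∏ k ∈ Icc 1 n, delta y (n + 2 - k) ^ a k)⁻¹
        * (∏ k ∈ Icc 1 n, (1 - ent y (n + 2 - k)) ^ b k)
        * (∏ k ∈ Icc 1 n, delta y (n + 1 - k) ^ b k)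
        * (∏ k ∈ Icc 1 n, delta y (n + 2 - k) ^ b k)⁻¹ := by
    symm
    rw [inv_prod_zpow, inv_prod_zpow]
    rw [← prod_mul_distrib, ← prod_mul_distrib, ← prod_mul_distrib, ← prod_mul_distrib,
      ← prod_mul_distrib]
    apply Finset.prod_congr rfl
    intro k hk
    rw [mem_Icc] at hk
    rw [one_sub_ent_Smap hy hk.1 hk.2, ent_Smap' hy hk.1 hk.2]
    rw [mul_zpow, mul_zpow, mul_zpow, mul_zpow, inv_zpow, inv_zpow, zpow_neg, zpow_neg]
    ring
  have hQ : (∏ k ∈ Icc 2 n, delta (Smap y) k ^ c k)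
      = ∏ k ∈ Icc 2 n, delta y (n + 1 - k) ^ c k :=
    Finset.prod_congr rfl fun k hk => by
      rw [mem_Icc] at hk
      rw [delta_Smap hy k (by omega)]
  have hQn : delta (Smap y) n = delta y 1 := by
    rw [delta_Smap hy n (by omega), show n + 1 - n = 1 from by omega]
  have hp1 : (∏ k ∈ Icc 1 n, ent y (n + 1 - k) ^ a k)
      = ∏ k ∈ Icc 1 n, ent y k ^ a (n + 1 - k) := by
    have h := reflect_prod (ent y) a 1 n (n+1) (by omega) (by omega)
    rw [show n + 1 - n = 1 from by omega, show n + 1 - 1 = n from by omega] at h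
    exact h
  have hp2 : (∏ k ∈ Icc 1 n, delta y (n - k) ^ a k)
      = ∏ k ∈ Icc 1 n, delta y k ^ (if 1 ≤ k ∧ k ≤ n - 1 then a (n - k) else 0) := by
    have h := reflect_prod (delta y) a 1 n n (by omega) (by omega)
    rw [show n - n = 0 from by omega] at h
    rw [h]
    have hins : Icc 0 (n-1) = insert 0 (Icc 1 (n-1)) := by
      ext m; simp only [mem_Icc, mem_insert]; omega
    rw [hins, Finset.prod_insert (by simp), delta_zero, one_zpow, one_mul]
    exact pad_prod (delta y) (fun k => a (n - k)) (le_refl 1) (by omega)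
  have hp3 : (∏ k ∈ Icc 1 n, delta y (n + 2 - k) ^ a k)
      = ∏ k ∈ Icc 1 n, delta y k ^ (if 2 ≤ k ∧ k ≤ n then a (n + 2 - k) else 0) := by
    have h := reflect_prod (delta y) a 1 n (n+2) (by omega) (by omega)
    rw [show n + 2 - n = 2 from by omega, show n + 2 - 1 = n + 1 from by omega] at h
    rw [h]
    have hins : Icc 2 (n+1) = insert (n+1) (Icc 2 n) := by
      ext m; simp only [mem_Icc, mem_insert]; omega
    rw [hins, Finset.prod_insert (by simp), delta_top, one_zpow, one_mul]
    exact pad_prod (delta y) (fun k => a (n + 2 - k)) (by omega) (le_refl n)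
  have hp4 : (∏ k ∈ Icc 1 n, (1 - ent y (n + 2 - k)) ^ b k)
      = ∏ k ∈ Icc 2 n, (1 - ent y k) ^ b (n + 2 - k) := by
    have hins : Icc 1 n = insert 1 (Icc 2 n) := by
      ext m; simp only [mem_Icc, mem_insert]; omega
    rw [hins, Finset.prod_insert (by simp), show n + 2 - 1 = n + 1 from by omega,
      ent_of_gt y (by omega), sub_zero, one_zpow, one_mul]
    have h := reflect_prod (fun m => 1 - ent y m) b 2 n (n+2) (by omega) (by omega)
    rw [show n + 2 - n = 2 from by omega, show n + 2 - 2 = n from by omega] at h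
    exact h
  have hp5 : (∏ k ∈ Icc 1 n, delta y (n + 1 - k) ^ b k)
      = ∏ k ∈ Icc 1 n, delta y k ^ b (n + 1 - k) := by
    have h := reflect_prod (delta y) b 1 n (n+1) (by omega) (by omega)
    rw [show n + 1 - n = 1 from by omega, show n + 1 - 1 = n from by omega] at h
    exact h
  have hp6 : (∏ k ∈ Icc 1 n, delta y (n + 2 - k) ^ b k)
      = ∏ k ∈ Icc 1 n, delta y k ^ (if 2 ≤ k ∧ k ≤ n then b (n + 2 - k) else 0) := by
    have h := reflect_prod (delta y) b 1 n (n+2) (by omega) (by omega)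
    rw [show n + 2 - n = 2 from by omega, show n + 2 - 1 = n + 1 from by omega] at h
    rw [h]
    have hins : Icc 2 (n+1) = insert (n+1) (Icc 2 n) := by
      ext m; simp only [mem_Icc, mem_insert]; omega
    rw [hins, Finset.prod_insert (by simp), delta_top, one_zpow, one_mul]
    exact pad_prod (delta y) (fun k => b (n + 2 - k)) (by omega) (le_refl n)
  have hq1 : (∏ k ∈ Icc 2 n, delta y (n + 1 - k) ^ c k)
      = ∏ k ∈ Icc 1 n, delta y k ^ (if 1 ≤ k ∧ k ≤ n - 1 then c (n + 1 - k) else 0) := by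
    have h := reflect_prod (delta y) c 2 n (n+1) (by omega) (by omega)
    rw [show n + 1 - n = 1 from by omega, show n + 1 - 2 = n - 1 from by omega] at h
    rw [h]
    exact pad_prod (delta y) (fun k => c (n + 1 - k)) (le_refl 1) (by omega)
  have hr1 : (∏ k ∈ Icc 1 n,
        ent y k ^ a (n + 1 - k) *
          (1 - ent y k) ^ (if k = 1 then a (n - 1) + b n - c n else b (n + 2 - k)))
      = (∏ k ∈ Icc 1 n, ent y k ^ a (n + 1 - k)) *
          (delta y 1 ^ (a (n - 1) + b n - c n) *
            ∏ k ∈ Icc 2 n, (1 - ent y k) ^ b (n + 2 - k)) := by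
    rw [Finset.prod_mul_distrib]
    congr 1
    have hins : Icc 1 n = insert 1 (Icc 2 n) := by
      ext m; simp only [mem_Icc, mem_insert]; omega
    rw [hins, Finset.prod_insert (by simp), if_pos rfl, delta_one]
    congr 1
    apply Finset.prod_congr rfl
    intro k hk
    rw [mem_Icc] at hk
    rw [if_neg (by omega : ¬ k = 1)]
  have hgg : (∏ k ∈ Icc 2 n,
        delta y k ^ (if k = n then a 2 + b 2 - b 1
          else a (n + 2 - k) + b (n + 2 - k) + c (n + 1 - k) - b (n + 1 - k) - a (n - k)))
      = ∏ k ∈ Icc 1 n, delta y k ^ (if 2 ≤ k ∧ k ≤ n then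
          (if k = n then a 2 + b 2 - b 1
            else a (n + 2 - k) + b (n + 2 - k) + c (n + 1 - k) - b (n + 1 - k) - a (n - k))
          else 0) :=
    pad_prod (delta y) _ (by omega) (le_refl n)
  rw [hP, hQ, hQn, hp1, hp2, hp3, hp4, hp5, hp6, hq1, hr1, hgg]
  set A := ∏ k ∈ Icc 1 n, ent y k ^ a (n + 1 - k) with hA
  set B := ∏ k ∈ Icc 2 n, (1 - ent y k) ^ b (n + 2 - k) with hB
  set P2 := ∏ k ∈ Icc 1 n, delta y k ^ (if 1 ≤ k ∧ k ≤ n - 1 then a (n - k) else 0) with hP2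
  set P3 := ∏ k ∈ Icc 1 n, delta y k ^ (if 2 ≤ k ∧ k ≤ n then a (n + 2 - k) else 0) with hP3
  set P5 := ∏ k ∈ Icc 1 n, delta y k ^ b (n + 1 - k) with hP5
  set P6 := ∏ k ∈ Icc 1 n, delta y k ^ (if 2 ≤ k ∧ k ≤ n then b (n + 2 - k) else 0) with hP6
  set Q1 := ∏ k ∈ Icc 1 n, delta y k ^ (if 1 ≤ k ∧ k ≤ n - 1 then c (n + 1 - k) else 0) with hQ1'
  set GG := ∏ k ∈ Icc 1 n, delta y k ^ (if 2 ≤ k ∧ k ≤ n then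
      (if k = n then a 2 + b 2 - b 1
        else a (n + 2 - k) + b (n + 2 - k) + c (n + 1 - k) - b (n + 1 - k) - a (n - k))
      else 0) with hGG'
  have hP3ne : P3 ≠ 0 := by rw [hP3]; exact hprodne _
  have hP6ne : P6 ≠ 0 := by rw [hP6]; exact hprodne _
  have hQ1ne : Q1 ≠ 0 := by rw [hQ1']; exact hprodne _
  have hGGne : GG ≠ 0 := by rw [hGG']; exact hprodne _
  have hd1 : delta y 1 ≠ 0 := delta_ne hy 1
  have hdn : delta y n ≠ 0 := delta_ne hy n
  have hmain : P2 * P3⁻¹ * P5 * P6⁻¹ * Q1⁻¹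
      = delta y 1 ^ (a (n - 1) + b n - c n) * GG⁻¹ := by
    rw [hP2, hP3, hP5, hP6, hQ1', hGG']
    rw [inv_prod_zpow, inv_prod_zpow, inv_prod_zpow, inv_prod_zpow]
    rw [single_zpow (delta y) (le_refl 1) (by omega : 1 ≤ n) (a (n - 1) + b n - c n)]
    rw [merge_prod _ _ hDIcc, merge_prod _ _ hDIcc, merge_prod _ _ hDIcc,
      merge_prod _ _ hDIcc, merge_prod _ _ hDIcc]
    apply Finset.prod_congr rfl
    intro k hk
    rw [mem_Icc] at hk
    congr 1
    by_cases hk1 : k = 1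
    · subst hk1
      rw [show n + 1 - 1 = n from by omega]
      simp only [if_pos (show 1 ≤ 1 ∧ 1 ≤ n - 1 from by omega),
        if_neg (show ¬(2 ≤ 1 ∧ 1 ≤ n) from by omega),
        eq_self_iff_true, if_true]
      ring
    · by_cases hkn : k = n
      · rw [hkn]
        rw [show n + 2 - n = 2 from by omega, show n + 1 - n = 1 from by omega]
        simp only [if_neg (show ¬(1 ≤ n ∧ n ≤ n - 1) from by omega),
          if_pos (show 2 ≤ n ∧ n ≤ n from by omega),
          if_neg (show ¬(n = 1) from by omega),
          eq_self_iff_true, if_true]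
        ring
      · simp only [if_pos (show 1 ≤ k ∧ k ≤ n - 1 from by omega),
          if_pos (show 2 ≤ k ∧ k ≤ n from by omega),
          if_neg hk1, if_neg hkn]
        ring
  calc delta y 1 / delta y n
        * (A * P2 * P3⁻¹ * B * P5 * P6⁻¹ / (Q1 * delta y 1))
      = A * B * (P2 * P3⁻¹ * P5 * P6⁻¹ * Q1⁻¹) / delta y n := by
        field_simp
    _ = A * B * (delta y 1 ^ (a (n - 1) + b n - c n) * GG⁻¹) / delta y n := by rw [hmain]
    _ = A * (delta y 1 ^ (a (n - 1) + b n - c n) * B) / (GG * delta y n) := by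
        field_simp

end Stmt10Aux

open Stmt10Aux in
theorem stmt10 (n : ℕ) (hn : 2 ≤ n) (a b c : ℕ → ℤ) :
    Lint n a b c =
      Lint n (fun k => a (n + 1 - k))
        (fun k => if k = 1 then a (n - 1) + b n - c n else b (n + 2 - k))
        (fun k => if k = n then a 2 + b 2 - b 1
          else a (n + 2 - k) + b (n + 2 - k) + c (n + 1 - k) - b (n + 1 - k) - a (n - k)) := by
  rw [Lint, Lint]
  have hae : (cube n : Set (Fin n → ℝ)) =ᵐ[volume] oc n := cube_ae_oc
  calc
    ∫⁻ x in cube n, ENNReal.ofReal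
        ((∏ k ∈ Icc 1 n, ent x k ^ a k * (1 - ent x k) ^ b k) /
          ((∏ k ∈ Icc 2 n, delta x k ^ c k) * delta x n))
      = ∫⁻ x in oc n, ENNReal.ofReal
        ((∏ k ∈ Icc 1 n, ent x k ^ a k * (1 - ent x k) ^ b k) /
          ((∏ k ∈ Icc 2 n, delta x k ^ c k) * delta x n)) := setLIntegral_congr hae
    _ = ∫⁻ x in Smap '' oc n, ENNReal.ofReal
        ((∏ k ∈ Icc 1 n, ent x k ^ a k * (1 - ent x k) ^ b k) /
          ((∏ k ∈ Icc 2 n, delta x k ^ c k) * delta x n)) := by rw [Smap_image]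
    _ = ∫⁻ y in oc n, ENNReal.ofReal |(Df y).det| * ENNReal.ofReal
        ((∏ k ∈ Icc 1 n, ent (Smap y) k ^ a k * (1 - ent (Smap y) k) ^ b k) /
          ((∏ k ∈ Icc 2 n, delta (Smap y) k ^ c k) * delta (Smap y) n)) :=
        lintegral_image_eq_lintegral_abs_det_fderiv_mul volume measurableSet_oc
          (fun y hy => (hasFDerivAt_Smap hy).hasFDerivWithinAt) Smap_injOn _
    _ = ∫⁻ y in oc n, ENNReal.ofReal
        ((∏ k ∈ Icc 1 n,
            ent y k ^ a (n + 1 - k) *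
              (1 - ent y k) ^ (if k = 1 then a (n - 1) + b n - c n else b (n + 2 - k))) /
          ((∏ k ∈ Icc 2 n,
              delta y k ^ (if k = n then a 2 + b 2 - b 1
                else a (n + 2 - k) + b (n + 2 - k) + c (n + 1 - k) - b (n + 1 - k) - a (n - k))) *
            delta y n)) := by
        apply setLIntegral_congr_fun measurableSet_oc
        intro y hy
        beta_reduce
        rw [← ENNReal.ofReal_mul (abs_nonneg _), abs_det_Df hy (by omega),
          integrand_eq hy hn a b c]
    _ = ∫⁻ y in cube n, ENNReal.ofReal
        ((∏ k ∈ Icc 1 n,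
            ent y k ^ a (n + 1 - k) *
              (1 - ent y k) ^ (if k = 1 then a (n - 1) + b n - c n else b (n + 2 - k))) /
          ((∏ k ∈ Icc 2 n,
              delta y k ^ (if k = n then a 2 + b 2 - b 1
                else a (n + 2 - k) + b (n + 2 - k) + c (n + 1 - k) - b (n + 1 - k) - a (n - k))) *
            delta y n)) := (setLIntegral_congr hae).symm

end
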